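/- (Theorem 3.2, order-reversed Serre–Lusztig relations for i ≠ τi.) Assume in addition the BKL relation: ∑_{n=0}^{1−c} (−1)^{n+c} B_i^{(n)} B_{τi} B_i^{(1−c−n)} = (q_i − q_i^{-1})^{-1} ( q_i^{c} (q_i^{-2}; q_i^{-2})_{−c} B_i^{(−c)} k̃_i − (q_i^{2}; q_i^{2})_{−c} B_i^{(−c)} k̃_{τi} ), where (a; x)_n = ∏_{k=0}^{n−1} (1 − a x^k). Then ỹ'_{m,e} = 0 for every integer m ≥ 1−c and every e ∈ {1, −1}. -/

import Mathlib

noncomputable section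

/-- The quantum integer `[n]_v = (v^n - v^{-n})/(v - v^{-1})`. -/
def qint {K : Type*} [Field K] (v : RatFunc K) (n : ℤ) : RatFunc K :=
  (v ^ n - v ^ (-n)) / (v - v⁻¹)

/-- The quantum factorial `[m]_v! = [1]_v [2]_v ⋯ [m]_v`. -/
def qfact {K : Type*} [Field K] (v : RatFunc K) (m : ℕ) : RatFunc K :=
  ∏ k ∈ Finset.range m, qint v ((k : ℤ) + 1)

/-- The q-Pochhammer symbol `(a; x)_n = ∏_{k=0}^{n-1} (1 - a x^k)`. -/
def qpoch {K : Type*} [Field K] (a x : RatFunc K) (n : ℕ) : RatFunc K :=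
  ∏ k ∈ Finset.range n, (1 - a * x ^ k)

/-- The divided power `x^{(m)} = x^m/[m]_v!` for `m ≥ 0`, and `0` for `m < 0`. -/
def dp {K : Type*} [Field K] {A : Type*} [Ring A] [Algebra (RatFunc K) A]
    (v : RatFunc K) (x : A) (m : ℤ) : A :=
  if m < 0 then 0 else (qfact v m.toNat)⁻¹ • x ^ m.toNat

/-- `P_{m,e} = ∏_{j=0}^{c+m−2} (−q_i^{e(2j−c−2m+2)} + q_i^{c−2})`,
an empty product (occurring when `c+m−2 < 0`) being `1`. -/
def Pprod {K : Type*} [Field K] (v : RatFunc K) (c : ℤ) (m : ℕ) (e : ℤ) : RatFunc K :=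
  ∏ j ∈ Finset.range (c + (m : ℤ) - 1).toNat,
    (-(v ^ (e * (2 * (j : ℤ) - c - 2 * (m : ℤ) + 2))) + v ^ (c - 2))

/-- `Q_{m,e} = ∏_{j=0}^{c+m−2} (−q_i^{e(2j−c−2m+2)} + q_i^{2−c})`. -/
def Qprod {K : Type*} [Field K] (v : RatFunc K) (c : ℤ) (m : ℕ) (e : ℤ) : RatFunc K :=
  ∏ j ∈ Finset.range (c + (m : ℤ) - 1).toNat,
    (-(v ^ (e * (2 * (j : ℤ) - c - 2 * (m : ℤ) + 2))) + v ^ (2 - c))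

/-- The element `ỹ_{m,e} = ∑_{r+s=m} (−1)^{r+c} q_i^{er(1−c−m)} B_i^{(r)} B_{τi} B_i^{(s)}
− ([1−c]!/[m]) (q_i−q_i^{-1})^{−c−1} ( P_{m,e} q_i^{(−c²+3c)/2} B_i^{(m−1)} k̃_i
  − (−1)^c Q_{m,e} q_i^{(c²−c)/2} B_i^{(m−1)} k̃_{τi} )`. -/
def ytil {K : Type*} [Field K] {A : Type*} [Ring A] [Algebra (RatFunc K) A]
    (v : RatFunc K) (Bi Bt ki kt : A) (c : ℤ) (m : ℕ) (e : ℤ) : A :=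
  (∑ r ∈ Finset.range (m + 1),
      ((-1 : RatFunc K) ^ ((r : ℤ) + c) * v ^ (e * (r : ℤ) * (1 - c - (m : ℤ)))) •
        (dp v Bi (r : ℤ) * Bt * dp v Bi ((m : ℤ) - (r : ℤ))))
    - (qfact v (1 - c).toNat / qint v (m : ℤ) * (v - v⁻¹) ^ (-c - 1)) •
      ((Pprod v c m e * v ^ ((-c ^ 2 + 3 * c) / 2)) • (dp v Bi ((m : ℤ) - 1) * ki)
        - ((-1 : RatFunc K) ^ c * Qprod v c m e * v ^ ((c ^ 2 - c) / 2)) •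
            (dp v Bi ((m : ℤ) - 1) * kt))

/-- The order-reversed element `ỹ'_{m,e}`. -/
def ytil' {K : Type*} [Field K] {A : Type*} [Ring A] [Algebra (RatFunc K) A]
    (v : RatFunc K) (Bi Bt ki kt : A) (c : ℤ) (m : ℕ) (e : ℤ) : A :=
  (∑ r ∈ Finset.range (m + 1),
      ((-1 : RatFunc K) ^ ((r : ℤ) + c) * v ^ (e * (r : ℤ) * (1 - c - (m : ℤ)))) •
        (dp v Bi ((m : ℤ) - (r : ℤ)) * Bt * dp v Bi (r : ℤ)))
    - (qfact v (1 - c).toNat / qint v (m : ℤ) * (v - v⁻¹) ^ (-c - 1)) •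
      ((Pprod v c m e * v ^ ((-c ^ 2 + 3 * c) / 2)) • (kt * dp v Bi ((m : ℤ) - 1))
        - ((-1 : RatFunc K) ^ c * Qprod v c m e * v ^ ((c ^ 2 - c) / 2)) •
            (ki * dp v Bi ((m : ℤ) - 1)))

/-- The BKL relation
`∑_{n=0}^{1−c} (−1)^{n+c} B_i^{(n)} B_{τi} B_i^{(1−c−n)}
 = (q_i−q_i^{-1})^{-1} ( q_i^c (q_i^{-2};q_i^{-2})_{−c} B_i^{(−c)} k̃_i
   − (q_i^2;q_i^2)_{−c} B_i^{(−c)} k̃_{τi} )`. -/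
def BKL {K : Type*} [Field K] {A : Type*} [Ring A] [Algebra (RatFunc K) A]
    (v : RatFunc K) (Bi Bt ki kt : A) (c : ℤ) : Prop :=
  ∑ n ∈ Finset.range ((1 - c).toNat + 1),
      ((-1 : RatFunc K) ^ ((n : ℤ) + c)) • (dp v Bi (n : ℤ) * Bt * dp v Bi (1 - c - (n : ℤ)))
    = (v - v⁻¹)⁻¹ •
        ((v ^ c * qpoch (v ^ (-2 : ℤ)) (v ^ (-2 : ℤ)) (-c).toNat) • (dp v Bi (-c) * ki)
          - qpoch (v ^ (2 : ℤ)) (v ^ (2 : ℤ)) (-c).toNat • (dp v Bi (-c) * kt))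

section AuxV
set_option linter.unusedSectionVars false

variable {K : Type*} [Field K]

lemma X_pow_ne_one : ∀ (k : ℕ), 0 < k → (RatFunc.X : RatFunc K) ^ k ≠ 1 := by
  intro k hk h
  have h2 : ((RatFunc.X : RatFunc K) ^ k).intDegree = (1:RatFunc K).intDegree := by rw [h]
  have h3 : ∀ j : ℕ, ((RatFunc.X : RatFunc K) ^ j).intDegree = j := by
    intro j
    induction j with
    | zero => simp
    | succ n ih =>
      rw [pow_succ, RatFunc.intDegree_mul (pow_ne_zero _ RatFunc.X_ne_zero) RatFunc.X_ne_zero,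
        ih, RatFunc.intDegree_X]
      push_cast; ring
  rw [h3, RatFunc.intDegree_one] at h2
  omega

lemma X_zpow_ne_one : ∀ (m : ℤ), m ≠ 0 → (RatFunc.X : RatFunc K) ^ m ≠ 1 := by
  intro m hm h
  rcases lt_trichotomy m 0 with h1 | h1 | h1
  · have : (RatFunc.X : RatFunc K) ^ (-m) = 1 := by
      rw [← inv_eq_one, ← zpow_neg, neg_neg, h]
    rw [show -m = ((-m).toNat : ℤ) by omega, zpow_natCast] at this
    exact X_pow_ne_one (-m).toNat (by omega) this
  · exact hm h1
  · rw [show m = (m.toNat : ℤ) by omega, zpow_natCast] at h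
    exact X_pow_ne_one m.toNat (by omega) h

section V
variable (ε : ℕ) (hε : 0 < ε) (v : RatFunc K) (hv : v = RatFunc.X ^ ε)
include hε hv

lemma v_ne_zero : v ≠ 0 := by
  rw [hv]; exact pow_ne_zero _ RatFunc.X_ne_zero

lemma v_zpow_inj {a b : ℤ} (h : v ^ a = v ^ b) : a = b := by
  by_contra hne
  have hX : (RatFunc.X : RatFunc K) ^ ((ε:ℤ) * a) = RatFunc.X ^ ((ε:ℤ) * b) := by
    rw [zpow_mul, zpow_mul, zpow_natCast RatFunc.X ε, ← hv, h]
  have : (RatFunc.X : RatFunc K) ^ ((ε:ℤ) * a - (ε:ℤ) * b) = 1 := by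
    rw [zpow_sub₀ RatFunc.X_ne_zero, hX, div_self (zpow_ne_zero _ RatFunc.X_ne_zero)]
  refine X_zpow_ne_one _ ?_ this
  have : (ε:ℤ) ≠ 0 := by omega
  intro hh
  rcases mul_eq_zero.1 (by linarith [hh] : (ε:ℤ) * (a - b) = 0) with h' | h'
  · exact this h'
  · exact hne (by omega)

lemma w_ne_zero : v - v⁻¹ ≠ 0 := by
  intro h
  have hv0 := v_ne_zero ε hε v hv
  have : v ^ (2:ℤ) = v ^ (0:ℤ) := by
    have : v * v = v * v⁻¹ := by rw [sub_eq_zero] at h; rw [← h]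
    rw [mul_inv_cancel₀ hv0] at this
    rw [zpow_two, zpow_zero, this]
  have := v_zpow_inj ε hε v hv this
  omega

lemma qint_ne_zero {n : ℤ} (hn : n ≠ 0) : qint v n ≠ 0 := by
  have hv0 := v_ne_zero ε hε v hv
  rw [qint, div_ne_zero_iff]
  refine ⟨?_, w_ne_zero ε hε v hv⟩
  rw [sub_ne_zero]
  intro h
  have := v_zpow_inj ε hε v hv h
  omega

lemma qfact_ne_zero (n : ℕ) : qfact v n ≠ 0 := by
  rw [qfact]
  exact Finset.prod_ne_zero_iff.2 fun k _ => qint_ne_zero ε hε v hv (by omega)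

end V

end AuxV

section Aux
set_option linter.unusedSectionVars false

variable {K : Type*} [Field K] {A : Type*} [Ring A] [Algebra (RatFunc K) A]
variable (v : RatFunc K) (hq : ∀ n : ℤ, n ≠ 0 → qint v n ≠ 0)
include hq

omit hq in
lemma qint_zero : qint v 0 = 0 := by simp [qint]

omit hq in
lemma qfact_succ (n : ℕ) : qfact v (n+1) = qfact v n * qint v ((n:ℤ)+1) :=
  Finset.prod_range_succ _ n

lemma qfact_nz (n : ℕ) : qfact v n ≠ 0 := by
  rw [qfact]; exact Finset.prod_ne_zero_iff.2 fun k _ => hq _ (by omega)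

omit hq in
lemma dp_nat (x : A) (n : ℕ) : dp v x (n:ℤ) = (qfact v n)⁻¹ • x ^ n := by
  simp [dp]

lemma dp_mul (x : A) (n : ℕ) :
    dp v x (n:ℤ) * x = qint v ((n:ℤ)+1) • dp v x ((n:ℤ)+1) := by
  rw [show ((n:ℤ)+1) = ((n+1:ℕ):ℤ) by push_cast; ring, dp_nat, dp_nat, smul_mul_assoc,
    ← pow_succ, smul_smul, qfact_succ]
  congr 1
  push_cast
  rw [mul_inv, mul_comm (qfact v n)⁻¹, ← mul_assoc,
    mul_inv_cancel₀ (hq _ (by omega : ((n:ℤ)+1) ≠ 0)), one_mul]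

lemma mul_dp (x : A) (n : ℕ) :
    x * dp v x (n:ℤ) = qint v ((n:ℤ)+1) • dp v x ((n:ℤ)+1) := by
  rw [show ((n:ℤ)+1) = ((n+1:ℕ):ℤ) by push_cast; ring, dp_nat, dp_nat, mul_smul_comm,
    ← pow_succ', smul_smul, qfact_succ]
  congr 1
  push_cast
  rw [mul_inv, mul_comm (qfact v n)⁻¹, ← mul_assoc,
    mul_inv_cancel₀ (hq _ (by omega : ((n:ℤ)+1) ≠ 0)), one_mul]

-- integer versions
lemma dp_mul' (x : A) {n : ℤ} (hn : 0 ≤ n) :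
    dp v x n * x = qint v (n+1) • dp v x (n+1) := by
  rw [show n = (n.toNat:ℤ) by omega]; exact dp_mul v hq x n.toNat

lemma mul_dp' (x : A) {n : ℤ} (hn : 0 ≤ n) :
    x * dp v x n = qint v (n+1) • dp v x (n+1) := by
  rw [show n = (n.toNat:ℤ) by omega]; exact mul_dp v hq x n.toNat

-- commutation of k-elements past powers
omit hq in
lemma k_pow_comm {k x : A} {u : RatFunc K} (h : k * x = u • (x * k)) (n : ℕ) :
    k * x ^ n = u ^ n • (x ^ n * k) := by
  induction n with
  | zero => simp
  | succ n ih =>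
    rw [pow_succ, ← mul_assoc, ih, smul_mul_assoc, mul_assoc, h, mul_smul_comm, smul_smul,
      pow_succ]
    congr 1
    rw [mul_assoc]

omit hq in
lemma k_dp_comm {k x : A} {u : RatFunc K} (h : k * x = u • (x * k)) (n : ℕ) :
    k * dp v x (n:ℤ) = u ^ n • (dp v x (n:ℤ) * k) := by
  rw [dp_nat, mul_smul_comm, k_pow_comm h n, smul_mul_assoc, smul_smul, smul_smul, mul_comm]

section Key
variable (hv0 : v ≠ 0) (hw : v - v⁻¹ ≠ 0)
omit hq
include hv0 hw

lemma qint_key {e : ℤ} (he : e = 1 ∨ e = -1) (r s : ℤ) :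
    v ^ (e*r) * qint v (s - r) + v ^ (e*r - e*s) * qint v r = qint v s := by
  rcases he with he | he <;> subst he <;>
  · rw [qint, qint, qint]
    rw [mul_div_assoc', mul_div_assoc', ← add_div]
    congr 1
    simp only [neg_sub, one_mul, neg_mul, sub_eq_add_neg, neg_add, neg_neg,
      zpow_add₀ hv0, zpow_neg]
    have h1 : v ^ r ≠ 0 := zpow_ne_zero _ hv0
    have h2 : v ^ s ≠ 0 := zpow_ne_zero _ hv0
    field_simp
    ring

lemma coefid {e : ℤ} (he : e = 1 ∨ e = -1) (r m c : ℤ) :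
    (-1 : RatFunc K)^(r+c) * v^(e*r*(1-c-m)) * qint v ((m:ℤ) + 1 - r)
      - v^(-(e*(c+2*m))) * ((-1 : RatFunc K)^((r-1)+c) * v^(e*(r-1)*(1-c-m)) * qint v r)
    = qint v (m + 1) * ((-1 : RatFunc K)^(r+c) * v^(e*r*(1-c-(m+1)))) := by
  have hn1 : (-1 : RatFunc K) ≠ 0 := by norm_num
  have hneg1 : (-1 : RatFunc K)^((r-1)+c) = -(-1 : RatFunc K)^(r+c) := by
    rw [show (r-1)+c = -1 + (r+c) by ring, zpow_add₀ hn1, zpow_neg_one, inv_neg, inv_one,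
      neg_one_mul]
  have hA : v^(e*r*(1-c-m)) = v^(e*r*(1-c-(m+1))) * v^(e*r) := by
    rw [← zpow_add₀ hv0]; congr 1; ring
  have hB : v^(-(e*(c+2*m))) * v^(e*(r-1)*(1-c-m))
      = v^(e*r*(1-c-(m+1))) * v^(e*r - e*(m+1)) := by
    rw [← zpow_add₀ hv0, ← zpow_add₀ hv0]; congr 1; ring
  have hk := qint_key v hv0 hw he r (m+1)
  calc (-1 : RatFunc K)^(r+c) * v^(e*r*(1-c-m)) * qint v ((m:ℤ) + 1 - r)
      - v^(-(e*(c+2*m))) * ((-1 : RatFunc K)^((r-1)+c) * v^(e*(r-1)*(1-c-m)) * qint v r)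
      = (-1 : RatFunc K)^(r+c) * v^(e*r*(1-c-m)) * qint v ((m:ℤ) + 1 - r)
        + (-1 : RatFunc K)^(r+c) * (v^(-(e*(c+2*m))) * v^(e*(r-1)*(1-c-m))) * qint v r := by
        rw [hneg1]; ring
    _ = (v^(e*r) * qint v ((m:ℤ) + 1 - r) + v^(e*r - e*(m+1)) * qint v r)
        * ((-1 : RatFunc K)^(r+c) * v^(e*r*(1-c-(m+1)))) := by
        rw [hA, hB]; ring
    _ = qint v (m + 1) * ((-1 : RatFunc K)^(r+c) * v^(e*r*(1-c-(m+1)))) := by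
        rw [show (m:ℤ) + 1 - r = m + 1 - r from rfl] at hk
        rw [hk]

end Key

def Ssum (v : RatFunc K) (Bi Bt : A) (c : ℤ) (m : ℕ) (e : ℤ) : A :=
  ∑ r ∈ Finset.range (m + 1),
      ((-1 : RatFunc K) ^ ((r : ℤ) + c) * v ^ (e * (r : ℤ) * (1 - c - (m : ℤ)))) •
        (dp v Bi ((m : ℤ) - (r : ℤ)) * Bt * dp v Bi (r : ℤ))

section SumRec
variable (hv0 : v ≠ 0) (hw : v - v⁻¹ ≠ 0)
include hv0 hw

lemma sum_rec (Bi Bt : A) (c : ℤ) (m : ℕ) {e : ℤ} (he : e = 1 ∨ e = -1) :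
    Bi * Ssum v Bi Bt c m e - v ^ (-(e*(c+2*(m:ℤ)))) • (Ssum v Bi Bt c m e * Bi)
      = qint v ((m:ℤ)+1) • Ssum v Bi Bt c (m+1) e := by
  have h1 : Bi * Ssum v Bi Bt c m e
      = ∑ r ∈ Finset.range (m+2),
          ((-1:RatFunc K)^((r:ℤ)+c) * v^(e*(r:ℤ)*(1-c-(m:ℤ))) * qint v ((m:ℤ)+1-(r:ℤ))) •
            (dp v Bi ((m:ℤ)+1-(r:ℤ)) * Bt * dp v Bi (r:ℤ)) := by
    rw [Ssum, Finset.mul_sum]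
    conv_rhs => rw [Finset.sum_range_succ]
    rw [show (m:ℤ) + 1 - ((m+1:ℕ):ℤ) = 0 by push_cast; ring, qint_zero, mul_zero, zero_smul,
      add_zero]
    refine Finset.sum_congr rfl fun r hr => ?_
    have hrm : (r:ℤ) ≤ (m:ℤ) := by have := Finset.mem_range.1 hr; omega
    rw [mul_smul_comm, ← mul_assoc, ← mul_assoc, mul_dp' v hq Bi (by omega : (0:ℤ) ≤ (m:ℤ)-(r:ℤ)),
      smul_mul_assoc, smul_mul_assoc, smul_smul, show (m:ℤ)-(r:ℤ)+1 = (m:ℤ)+1-(r:ℤ) by ring]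
  have h2 : Ssum v Bi Bt c m e * Bi
      = ∑ r ∈ Finset.range (m+2),
          ((-1:RatFunc K)^(((r:ℤ)-1)+c) * v^(e*((r:ℤ)-1)*(1-c-(m:ℤ))) * qint v (r:ℤ)) •
            (dp v Bi ((m:ℤ)+1-(r:ℤ)) * Bt * dp v Bi (r:ℤ)) := by
    rw [Ssum, Finset.sum_mul]
    conv_rhs => rw [Finset.sum_range_succ' _ (m+1)]
    have hg0 : ((-1:RatFunc K)^((((0:ℕ)):ℤ)-1+c) * v^(e*((((0:ℕ)):ℤ)-1)*(1-c-(m:ℤ)))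
        * qint v (((0:ℕ)):ℤ)) •
            (dp v Bi ((m:ℤ)+1-(((0:ℕ)):ℤ)) * Bt * dp v Bi (((0:ℕ)):ℤ)) = 0 := by
      norm_num [qint_zero]
    rw [hg0, add_zero]
    refine Finset.sum_congr rfl fun r hr => ?_
    have hc1 : (((r+1:ℕ)):ℤ) = (r:ℤ)+1 := by push_cast; ring
    rw [hc1, show (r:ℤ)+1-1 = (r:ℤ) by ring, show (m:ℤ)+1-((r:ℤ)+1) = (m:ℤ)-(r:ℤ) by ring,
      smul_mul_assoc, mul_assoc (dp v Bi ((m:ℤ)-(r:ℤ)) * Bt), dp_mul v hq Bi r,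
      mul_smul_comm, smul_smul]
  rw [h1, h2, Finset.smul_sum, ← Finset.sum_sub_distrib, Ssum, Finset.smul_sum]
  have hcast : ((m+1+1:ℕ)) = m+2 := by omega
  rw [hcast]
  refine Finset.sum_congr rfl fun r hr => ?_
  rw [smul_smul, smul_smul, ← sub_smul]
  have hm1 : ((m+1:ℕ):ℤ) = (m:ℤ)+1 := by push_cast; ring
  rw [hm1]
  exact congrArg (· • (dp v Bi ((m:ℤ)+1-(r:ℤ)) * Bt * dp v Bi (r:ℤ)))
    (coefid v hv0 hw he (r:ℤ) (m:ℤ) c)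

end SumRec

omit hq in
lemma Pprod_succ (c : ℤ) (m : ℕ) (e : ℤ) (hm : 1 - c ≤ (m:ℤ)) :
    Pprod v c (m+1) e = Pprod v c m e * (v ^ (c-2) - v ^ (-(e*(c+2*(m:ℤ))))) := by
  have hN : (c + ((m+1:ℕ):ℤ) - 1).toNat = (c + (m:ℤ) - 1).toNat + 1 := by
    push_cast; omega
  rw [Pprod, hN, Finset.prod_range_succ' _ ((c + (m:ℤ) - 1).toNat)]
  congr 1
  · rw [Pprod]
    refine Finset.prod_congr rfl fun j _ => ?_
    congr 2
    push_cast; ring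
  · rw [show e * (2*((0:ℕ):ℤ) - c - 2*((m+1:ℕ):ℤ) + 2) = -(e*(c+2*(m:ℤ))) by push_cast; ring]
    ring

omit hq in
lemma Qprod_succ (c : ℤ) (m : ℕ) (e : ℤ) (hm : 1 - c ≤ (m:ℤ)) :
    Qprod v c (m+1) e = Qprod v c m e * (v ^ (2-c) - v ^ (-(e*(c+2*(m:ℤ))))) := by
  have hN : (c + ((m+1:ℕ):ℤ) - 1).toNat = (c + (m:ℤ) - 1).toNat + 1 := by
    push_cast; omega
  rw [Qprod, hN, Finset.prod_range_succ' _ ((c + (m:ℤ) - 1).toNat)]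
  congr 1
  · rw [Qprod]
    refine Finset.prod_congr rfl fun j _ => ?_
    congr 2
    push_cast; ring
  · rw [show e * (2*((0:ℕ):ℤ) - c - 2*((m+1:ℕ):ℤ) + 2) = -(e*(c+2*(m:ℤ))) by push_cast; ring]
    ring

def Ccor (v : RatFunc K) (Bi ki kt : A) (c : ℤ) (m : ℕ) (e : ℤ) : A :=
  (qfact v (1 - c).toNat / qint v (m : ℤ) * (v - v⁻¹) ^ (-c - 1)) •
      ((Pprod v c m e * v ^ ((-c ^ 2 + 3 * c) / 2)) • (kt * dp v Bi ((m : ℤ) - 1))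
        - ((-1 : RatFunc K) ^ c * Qprod v c m e * v ^ ((c ^ 2 - c) / 2)) •
            (ki * dp v Bi ((m : ℤ) - 1)))

section CorrRec
variable (hv0 : v ≠ 0) (hw : v - v⁻¹ ≠ 0)
include hv0 hw

lemma corr_rec (Bi ki kt : A) (c : ℤ) (m : ℕ) (e : ℤ)
    (hki : ki * Bi = v ^ (c - 2) • (Bi * ki))
    (hkt : kt * Bi = v ^ (2 - c) • (Bi * kt))
    (hm1 : 1 ≤ m) (hm : 1 - c ≤ (m:ℤ))
    (hmz : qint v (m:ℤ) ≠ 0) (hmz1 : qint v ((m:ℤ)+1) ≠ 0) :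
    Bi * Ccor v Bi ki kt c m e - v ^ (-(e*(c+2*(m:ℤ)))) • (Ccor v Bi ki kt c m e * Bi)
      = qint v ((m:ℤ)+1) • Ccor v Bi ki kt c (m+1) e := by
  have hm0 : (0:ℤ) ≤ (m:ℤ) - 1 := by omega
  have hBikt : Bi * kt = v ^ (c-2) • (kt * Bi) := by
    rw [hkt, smul_smul, ← zpow_add₀ hv0, show c-2+(2-c) = 0 by ring, zpow_zero, one_smul]
  have hBiki : Bi * ki = v ^ (2-c) • (ki * Bi) := by
    rw [hki, smul_smul, ← zpow_add₀ hv0, show 2-c+(c-2) = 0 by ring, zpow_zero, one_smul]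
  have h1 : Bi * (kt * dp v Bi ((m:ℤ)-1)) = (v^(c-2) * qint v (m:ℤ)) • (kt * dp v Bi (m:ℤ)) := by
    rw [← mul_assoc, hBikt, smul_mul_assoc, mul_assoc, mul_dp' v hq Bi hm0,
      show (m:ℤ)-1+1 = (m:ℤ) by ring, mul_smul_comm, smul_smul]
  have h2 : Bi * (ki * dp v Bi ((m:ℤ)-1)) = (v^(2-c) * qint v (m:ℤ)) • (ki * dp v Bi (m:ℤ)) := by
    rw [← mul_assoc, hBiki, smul_mul_assoc, mul_assoc, mul_dp' v hq Bi hm0,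
      show (m:ℤ)-1+1 = (m:ℤ) by ring, mul_smul_comm, smul_smul]
  have h3 : (kt * dp v Bi ((m:ℤ)-1)) * Bi = qint v (m:ℤ) • (kt * dp v Bi (m:ℤ)) := by
    rw [mul_assoc, dp_mul' v hq Bi hm0, show (m:ℤ)-1+1 = (m:ℤ) by ring, mul_smul_comm]
  have h4 : (ki * dp v Bi ((m:ℤ)-1)) * Bi = qint v (m:ℤ) • (ki * dp v Bi (m:ℤ)) := by
    rw [mul_assoc, dp_mul' v hq Bi hm0, show (m:ℤ)-1+1 = (m:ℤ) by ring, mul_smul_comm]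
  have hdiv : ∀ (q X P : RatFunc K), q ≠ 0 →
      qfact v (1-c).toNat / q * (v-v⁻¹)^(-c-1) * P * (X * q)
        = qfact v (1-c).toNat * (v-v⁻¹)^(-c-1) * P * X := by
    intro q X P hq0
    rw [div_eq_mul_inv]
    rw [show qfact v (1-c).toNat * q⁻¹ * (v-v⁻¹)^(-c-1) * P * (X * q)
      = qfact v (1-c).toNat * (v-v⁻¹)^(-c-1) * P * X * (q⁻¹ * q) by ring,
      inv_mul_cancel₀ hq0, mul_one]
  have hdiv2 : ∀ (q P : RatFunc K), q ≠ 0 →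
      qfact v (1-c).toNat / q * (v-v⁻¹)^(-c-1) * P * q
        = qfact v (1-c).toNat * (v-v⁻¹)^(-c-1) * P := by
    intro q P hq0
    rw [div_eq_mul_inv]
    rw [show qfact v (1-c).toNat * q⁻¹ * (v-v⁻¹)^(-c-1) * P * q
      = qfact v (1-c).toNat * (v-v⁻¹)^(-c-1) * P * (q⁻¹ * q) by ring,
      inv_mul_cancel₀ hq0, mul_one]
  have hPs := Pprod_succ v c m e hm
  have hQs := Qprod_succ v c m e hm
  rw [Ccor, Ccor, show (((m+1:ℕ)):ℤ) - 1 = (m:ℤ) by push_cast; ring]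
  simp only [smul_sub, mul_sub, sub_mul, mul_smul_comm, smul_mul_assoc, smul_smul]
  rw [h1, h2, h3, h4]
  simp only [smul_smul]
  have hdiv3 : ∀ (q P : RatFunc K), q ≠ 0 →
      q * (qfact v (1-c).toNat / q * (v-v⁻¹)^(-c-1) * P)
        = qfact v (1-c).toNat * (v-v⁻¹)^(-c-1) * P := by
    intro q P hq0
    rw [div_eq_mul_inv]
    rw [show q * (qfact v (1-c).toNat * q⁻¹ * (v-v⁻¹)^(-c-1) * P)
      = qfact v (1-c).toNat * (v-v⁻¹)^(-c-1) * P * (q⁻¹ * q) by ring,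
      inv_mul_cancel₀ hq0, mul_one]
  rw [sub_sub_sub_comm, ← sub_smul, ← sub_smul,
    show ((m+1:ℕ):ℤ) = (m:ℤ)+1 by push_cast; ring]
  refine congrArg₂ (· - ·) ?_ ?_
  · refine congrArg (· • (kt * dp v Bi (m:ℤ))) ?_
    rw [hdiv _ _ _ hmz, mul_assoc (v^(-(e*(c+2*(m:ℤ))))), hdiv2 _ _ hmz,
      hdiv3 _ _ hmz1, hPs]
    ring
  · refine congrArg (· • (ki * dp v Bi (m:ℤ))) ?_
    rw [hdiv _ _ _ hmz, mul_assoc (v^(-(e*(c+2*(m:ℤ))))), hdiv2 _ _ hmz,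
      hdiv3 _ _ hmz1, hQs]
    ring

end CorrRec

def Tn : ℕ → ℕ
  | 0 => 0
  | n+1 => Tn n + (n+1)

section Poch
variable (hv0 : v ≠ 0) (hw : v - v⁻¹ ≠ 0)
omit hq
include hv0 hw

lemma qint_mul_w (x : ℤ) : qint v x * (v - v⁻¹) = v ^ x - v ^ (-x) :=
  div_mul_cancel₀ _ hw

lemma vsub_pos (a : ℤ) : v^a - v^(-a) = -(v^(-a) * (1 - v^(2*a))) := by
  rw [mul_sub, mul_one, ← zpow_add₀ hv0, show -a + 2*a = a by ring]
  ring

lemma vsub_neg (a : ℤ) : v^a - v^(-a) = v^a * (1 - v^(-(2*a))) := by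
  rw [mul_sub, mul_one, ← zpow_add₀ hv0, show a + -(2*a) = -a by ring]

lemma qfact_A (n : ℕ) : qfact v n * (v - v⁻¹)^n
    = (-1 : RatFunc K)^n * v^(-(Tn n : ℤ)) * qpoch (v^(2:ℤ)) (v^(2:ℤ)) n := by
  induction n with
  | zero => simp [qfact, qpoch, Tn]
  | succ n ih =>
    rw [qfact_succ, pow_succ,
      show qfact v n * qint v ((n:ℤ)+1) * ((v-v⁻¹)^n * (v-v⁻¹))
        = (qfact v n * (v-v⁻¹)^n) * (qint v ((n:ℤ)+1) * (v-v⁻¹)) by ring,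
      ih, qint_mul_w v hv0 hw]
    conv_rhs => rw [qpoch, Finset.prod_range_succ, ← qpoch]
    rw [← zpow_natCast (v^(2:ℤ)) n, ← zpow_mul,
      show (v:RatFunc K)^(2:ℤ) * v^((2:ℤ)*(n:ℤ)) = v^(2*((n:ℤ)+1)) by
        rw [← zpow_add₀ hv0]; congr 1; ring,
      vsub_pos v hv0 hw ((n:ℤ)+1),
      show (Tn (n+1) : ℤ) = (Tn n : ℤ) + ((n:ℤ)+1) by
        show ((Tn n + (n+1) : ℕ) : ℤ) = _; push_cast; ring,
      neg_add, zpow_add₀ hv0, pow_succ]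
    simp only [sub_eq_add_neg, neg_add, neg_neg, zpow_add₀ hv0, zpow_neg, zpow_one, zpow_mul,
      zpow_two]
    field_simp

lemma qfact_A' (n : ℕ) : qfact v n * (v - v⁻¹)^n * v^((Tn n : ℕ):ℤ)
    = (-1 : RatFunc K)^n * qpoch (v^(2:ℤ)) (v^(2:ℤ)) n := by
  have hTnz : (v:RatFunc K) ^ ((Tn n:ℕ):ℤ) ≠ 0 := zpow_ne_zero _ hv0
  rw [qfact_A v hv0 hw n, zpow_neg,
    show (-1:RatFunc K)^n * (v^((Tn n:ℕ):ℤ))⁻¹ * qpoch (v^(2:ℤ)) (v^(2:ℤ)) n * v^((Tn n:ℕ):ℤ)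
      = (-1:RatFunc K)^n * qpoch (v^(2:ℤ)) (v^(2:ℤ)) n * ((v^((Tn n:ℕ):ℤ))⁻¹ * v^((Tn n:ℕ):ℤ))
      from by ring,
    inv_mul_cancel₀ hTnz, mul_one]

lemma qfact_B (n : ℕ) : qfact v n * (v - v⁻¹)^n
    = v^((Tn n : ℤ)) * qpoch (v^(-2:ℤ)) (v^(-2:ℤ)) n := by
  induction n with
  | zero => simp [qfact, qpoch, Tn]
  | succ n ih =>
    rw [qfact_succ, pow_succ,
      show qfact v n * qint v ((n:ℤ)+1) * ((v-v⁻¹)^n * (v-v⁻¹))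
        = (qfact v n * (v-v⁻¹)^n) * (qint v ((n:ℤ)+1) * (v-v⁻¹)) by ring,
      ih, qint_mul_w v hv0 hw]
    conv_rhs => rw [qpoch, Finset.prod_range_succ, ← qpoch]
    rw [← zpow_natCast (v^(-2:ℤ)) n, ← zpow_mul,
      show (v:RatFunc K)^(-2:ℤ) * v^((-2:ℤ)*(n:ℤ)) = v^(-(2*((n:ℤ)+1))) by
        rw [← zpow_add₀ hv0]; congr 1; ring,
      vsub_neg v hv0 hw ((n:ℤ)+1),
      show (Tn (n+1) : ℤ) = (Tn n : ℤ) + ((n:ℤ)+1) by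
        show ((Tn n + (n+1) : ℕ) : ℤ) = _; push_cast; ring,
      zpow_add₀ hv0]
    simp only [sub_eq_add_neg, neg_add, neg_neg, zpow_add₀ hv0, zpow_neg, zpow_one, zpow_mul,
      zpow_two]
    field_simp

end Poch

omit hq in
lemma ytil'_eq (Bi Bt ki kt : A) (c : ℤ) (m : ℕ) (e : ℤ) :
    ytil' v Bi Bt ki kt c m e = Ssum v Bi Bt c m e - Ccor v Bi ki kt c m e := rfl

omit hq in
lemma Tn_eq (n : ℕ) : 2 * Tn n = n * (n+1) := by
  induction n with
  | zero => simp [Tn]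
  | succ n ih => rw [Tn]; nlinarith [ih]

omit hq in
lemma neg_one_zpow_even_diff {F : Type*} [Field F] {a b : ℤ} (h : 2 ∣ (a - b)) :
    (-1 : F) ^ a = (-1 : F) ^ b := by
  obtain ⟨k, hk⟩ := h
  have ha : a = b + 2 * k := by omega
  subst ha
  rw [zpow_add₀ (by norm_num : (-1:F) ≠ 0), zpow_mul]
  norm_num

section Base
variable (hv0 : v ≠ 0) (hw : v - v⁻¹ ≠ 0)
include hv0 hw

lemma base_case (Bi Bt ki kt : A) (c : ℤ) (hc : c ≤ 0)
    (hki : ki * Bi = v ^ (c - 2) • (Bi * ki))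
    (hkt : kt * Bi = v ^ (2 - c) • (Bi * kt))
    (hbkl : BKL v Bi Bt ki kt c) (e : ℤ) :
    ytil' v Bi Bt ki kt c ((1-c).toNat) e = 0 := by
  have hn1 : (-1 : RatFunc K) ≠ 0 := by norm_num
  set m0 := (1-c).toNat with hm0def
  have hm0 : ((m0:ℕ):ℤ) = 1 - c := by omega
  have hnc : (((-c).toNat:ℕ):ℤ) = -c := by omega
  have hmnc : m0 = (-c).toNat + 1 := by omega
  rw [ytil'_eq, sub_eq_zero]
  -- LHS : the sum
  have h1 : Ssum v Bi Bt c m0 e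
      = ∑ r ∈ Finset.range (m0+1),
          ((-1:RatFunc K)^((r:ℤ)+c)) • (dp v Bi ((m0:ℤ)-(r:ℤ)) * Bt * dp v Bi (r:ℤ)) := by
    rw [Ssum]
    refine Finset.sum_congr rfl fun r hr => ?_
    rw [show e*(r:ℤ)*(1-c-(m0:ℤ)) = 0 by rw [hm0]; ring, zpow_zero, mul_one]
  have h2 : (∑ r ∈ Finset.range (m0+1),
        ((-1:RatFunc K)^((r:ℤ)+c)) • (dp v Bi ((m0:ℤ)-(r:ℤ)) * Bt * dp v Bi (r:ℤ)))
      = (-1:RatFunc K)^((1:ℤ)-c) •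
          ∑ n ∈ Finset.range (m0+1),
            ((-1:RatFunc K)^((n:ℤ)+c)) • (dp v Bi (n:ℤ) * Bt * dp v Bi (1-c-(n:ℤ))) := by
    rw [← Finset.sum_range_reflect
      (fun r => ((-1:RatFunc K)^((r:ℤ)+c)) • (dp v Bi ((m0:ℤ)-(r:ℤ)) * Bt * dp v Bi (r:ℤ)))
      (m0+1), Finset.smul_sum]
    refine Finset.sum_congr rfl fun n hn => ?_
    have hnm : n ≤ m0 := by have := Finset.mem_range.1 hn; omega
    have hcast : ((m0 + 1 - 1 - n : ℕ) : ℤ) = (m0:ℤ) - (n:ℤ) := by omega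
    rw [smul_smul, hcast, show (m0:ℤ) - ((m0:ℤ)-(n:ℤ)) = (n:ℤ) by ring,
      show (m0:ℤ) - (n:ℤ) = 1 - c - (n:ℤ) by rw [hm0]]
    congr 1
    rw [← zpow_add₀ hn1]
    refine neg_one_zpow_even_diff ?_
    omega
  rw [h1, h2, hbkl]
  -- RHS : the correction term
  have hPone : Pprod v c m0 e = 1 := by
    rw [Pprod, show (c + ((m0:ℕ):ℤ) - 1).toNat = 0 by omega]
    simp
  have hQone : Qprod v c m0 e = 1 := by
    rw [Qprod, show (c + ((m0:ℕ):ℤ) - 1).toNat = 0 by omega]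
    simp
  have hktd : kt * dp v Bi (-c) = v^((2-c)*(-c)) • (dp v Bi (-c) * kt) := by
    have := k_dp_comm v hkt (-c).toNat
    rw [hnc] at this
    rw [this, ← zpow_natCast (v^(2-c)) (-c).toNat, ← zpow_mul, hnc]
  have hkid : ki * dp v Bi (-c) = v^((c-2)*(-c)) • (dp v Bi (-c) * ki) := by
    have := k_dp_comm v hki (-c).toNat
    rw [hnc] at this
    rw [this, ← zpow_natCast (v^(c-2)) (-c).toNat, ← zpow_mul, hnc]
  have hκ : qfact v (1-c).toNat / qint v ((m0:ℕ):ℤ) * (v-v⁻¹)^(-c-1)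
      = qfact v (-c).toNat * (v-v⁻¹)^((-c).toNat) * (v-v⁻¹)⁻¹ := by
    rw [← hm0def, hmnc, qfact_succ, show (((-c).toNat+1:ℕ):ℤ) = (((-c).toNat:ℕ):ℤ)+1 by
        push_cast; ring,
      mul_div_assoc, div_self (hq _ (by omega)), mul_one,
      show -c-1 = (((-c).toNat:ℕ):ℤ) + (-1) by omega, zpow_add₀ hw, zpow_natCast, zpow_neg_one]
    rw [mul_assoc]
  rw [Ccor, show ((m0:ℕ):ℤ) - 1 = -c by omega, hPone, hQone, one_mul, hktd, hkid, hκ]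
  simp only [smul_smul, smul_sub]
  -- scalar identities
  have hsq : (c:ℤ)^2 = c * c := sq c
  have h2T : 2 * ((Tn (-c).toNat:ℕ):ℤ) = c*c - c := by
    rw [show ((2:ℤ)) * ((Tn (-c).toNat:ℕ):ℤ) = ((2 * Tn (-c).toNat : ℕ):ℤ) by push_cast; ring,
      Tn_eq]
    push_cast
    rw [hnc]
    ring
  have hsign : (-1:RatFunc K)^((1:ℤ)-c) = -(-1:RatFunc K)^c := by
    rw [show -(-1:RatFunc K)^c = (-1:RatFunc K)^(1+c) by
      rw [zpow_add₀ hn1, zpow_one]; ring]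
    refine neg_one_zpow_even_diff ?_
    omega
  have hsign2 : (-1:RatFunc K)^((1:ℤ)-c) = -(-1:RatFunc K)^((-c).toNat : ℕ) := by
    rw [← zpow_natCast (-1:RatFunc K) (-c).toNat, hnc, show (1:ℤ)-c = 1 + -c by ring,
      zpow_add₀ hn1, zpow_one]
    ring
  have hki_eq : (-1:RatFunc K)^((1:ℤ)-c)
        * ((v-v⁻¹)⁻¹ * (v^c * qpoch (v^(-2:ℤ)) (v^(-2:ℤ)) (-c).toNat))
      = -(qfact v (-c).toNat * (v-v⁻¹)^((-c).toNat) * (v-v⁻¹)⁻¹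
          * ((-1:RatFunc K)^c * 1 * v^((c^2-c)/2) * v^((c-2)*(-c)))) := by
    rw [qfact_B v hv0 hw, hsign]
    rw [show v^c = v^((Tn (-c).toNat:ℕ):ℤ) * v^((c^2-c)/2) * v^((c-2)*(-c)) by
      rw [← zpow_add₀ hv0, ← zpow_add₀ hv0]
      congr 1
      rw [hsq, show (c-2)*(-c) = -(c*c) + 2*c by ring]
      generalize hs : c * c = s at h2T ⊢
      omega]
    ring
  have hkt_eq : (-1:RatFunc K)^((1:ℤ)-c)
        * ((v-v⁻¹)⁻¹ * qpoch (v^(2:ℤ)) (v^(2:ℤ)) (-c).toNat)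
      = -(qfact v (-c).toNat * (v-v⁻¹)^((-c).toNat) * (v-v⁻¹)⁻¹
          * (v^((-c^2+3*c)/2) * v^((2-c)*(-c)))) := by
    rw [show v^((-c^2+3*c)/2) * v^((2-c)*(-c)) = v^((Tn (-c).toNat:ℕ):ℤ) by
        rw [← zpow_add₀ hv0]
        congr 1
        rw [show (-c^2+3*c)/2 = (-(c*c)+3*c)/2 by rw [hsq],
          show (2-c)*(-c) = c*c - 2*c by ring]
        generalize hs : c * c = s at h2T ⊢
        omega,
      show qfact v (-c).toNat * (v-v⁻¹)^((-c).toNat) * (v-v⁻¹)⁻¹ * v^((Tn (-c).toNat:ℕ):ℤ)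
        = qfact v (-c).toNat * (v-v⁻¹)^((-c).toNat) * v^((Tn (-c).toNat:ℕ):ℤ) * (v-v⁻¹)⁻¹
        from by ring,
      qfact_A' v hv0 hw, hsign2]
    ring
  rw [hki_eq, hkt_eq, neg_smul, neg_smul]
  abel

end Base

section Main
variable (hv0 : v ≠ 0) (hw : v - v⁻¹ ≠ 0)
include hv0 hw

lemma ytil'_rec (Bi Bt ki kt : A) (c : ℤ) (m : ℕ) {e : ℤ} (he : e = 1 ∨ e = -1)
    (hki : ki * Bi = v ^ (c - 2) • (Bi * ki))
    (hkt : kt * Bi = v ^ (2 - c) • (Bi * kt))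
    (hm1 : 1 ≤ m) (hm : 1 - c ≤ (m:ℤ)) :
    qint v ((m:ℤ)+1) • ytil' v Bi Bt ki kt c (m+1) e
      = Bi * ytil' v Bi Bt ki kt c m e
        - v ^ (-(e*(c+2*(m:ℤ)))) • (ytil' v Bi Bt ki kt c m e * Bi) := by
  have hmz : qint v (m:ℤ) ≠ 0 := hq _ (by omega)
  have hmz1 : qint v ((m:ℤ)+1) ≠ 0 := hq _ (by omega)
  rw [ytil'_eq, ytil'_eq, smul_sub, mul_sub, sub_mul, smul_sub,
    ← sum_rec v hq hv0 hw Bi Bt c m he,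
    ← corr_rec v hq hv0 hw Bi ki kt c m e hki hkt hm1 hm hmz hmz1]
  abel

lemma main_induct (Bi Bt ki kt : A) (c : ℤ) (hc : c ≤ 0)
    (hki : ki * Bi = v ^ (c - 2) • (Bi * ki))
    (hkt : kt * Bi = v ^ (2 - c) • (Bi * kt))
    (hbkl : BKL v Bi Bt ki kt c) {e : ℤ} (he : e = 1 ∨ e = -1) :
    ∀ k : ℕ, ytil' v Bi Bt ki kt c ((1-c).toNat + k) e = 0 := by
  intro k
  induction k with
  | zero => simpa using base_case v hq hv0 hw Bi Bt ki kt c hc hki hkt hbkl e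
  | succ k ih =>
    have hrec := ytil'_rec v hq hv0 hw Bi Bt ki kt c ((1-c).toNat + k) he hki hkt
      (by omega) (by push_cast; omega)
    rw [show (1-c).toNat + (k+1) = ((1-c).toNat + k) + 1 by omega]
    have h0 : qint v ((((1-c).toNat + k : ℕ):ℤ)+1) •
        ytil' v Bi Bt ki kt c (((1-c).toNat + k) + 1) e = 0 := by
      rw [hrec, ih]
      simp
    exact (smul_eq_zero.mp h0).resolve_left (hq _ (by omega))

lemma main_result (Bi Bt ki kt : A) (c : ℤ) (hc : c ≤ 0)
    (hki : ki * Bi = v ^ (c - 2) • (Bi * ki))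
    (hkt : kt * Bi = v ^ (2 - c) • (Bi * kt))
    (hbkl : BKL v Bi Bt ki kt c) :
    ∀ (m : ℕ), 1 - c ≤ (m : ℤ) → ∀ e : ℤ, e = 1 ∨ e = -1 →
      ytil' v Bi Bt ki kt c m e = 0 := by
  intro m hm e he
  rw [show m = (1-c).toNat + (m - (1-c).toNat) by omega]
  exact main_induct v hq hv0 hw Bi Bt ki kt c hc hki hkt hbkl he _

end Main

end Aux

/-- (Theorem 3.2, order-reversed Serre–Lusztig relations for i ≠ τi.) Assuming the
BKL relation, ỹ'_{m,e} = 0 for every integer m ≥ 1−c and every e ∈ {1, −1}. -/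
theorem stmt5 {K : Type*} [Field K] [CharZero K]
    {A : Type*} [Ring A] [Algebra (RatFunc K) A]
    (ε : ℕ) (hε : 0 < ε) (v : RatFunc K) (hv : v = RatFunc.X ^ ε)
    (Bi Bt ki kt : A) (c : ℤ) (hc : c ≤ 0)
    (hki : ki * Bi = v ^ (c - 2) • (Bi * ki))
    (hkt : kt * Bi = v ^ (2 - c) • (Bi * kt))
    (hbkl : BKL v Bi Bt ki kt c) :
    ∀ (m : ℕ), 1 - c ≤ (m : ℤ) → ∀ e : ℤ, e = 1 ∨ e = -1 →
      ytil' v Bi Bt ki kt c m e = 0 := by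
  have hv0 : v ≠ 0 := v_ne_zero ε hε v hv
  have hw : v - v⁻¹ ≠ 0 := w_ne_zero ε hε v hv
  have hq : ∀ n : ℤ, n ≠ 0 → qint v n ≠ 0 := fun n hn => qint_ne_zero ε hε v hv hn
  exact main_result v hq hv0 hw Bi Bt ki kt c hc hki hkt hbkl
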